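/- For every antichain Γ in the poset Δ⁺ of positive roots of type A_n, the OY-number satisfies 0 ≤ 𝒴(Γ) ≤ n − 1. -/

import Mathlib

open Finset

/-- The root order on pairs: `(i,j) ≼ (i',j')` iff `i' ≤ i` and `j ≤ j'`. -/
def rle (p q : ℕ × ℕ) : Prop := q.1 ≤ p.1 ∧ p.2 ≤ q.2

instance : DecidableRel rle := fun p q =>
  inferInstanceAs (Decidable (q.1 ≤ p.1 ∧ p.2 ≤ q.2))

/-- The positive roots of type `A_n`, modelled as pairs `(i,j)` with `1 ≤ i ≤ j ≤ n`. -/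
def roots (n : ℕ) : Finset (ℕ × ℕ) :=
  ((Finset.Icc 1 n) ×ˢ (Finset.Icc 1 n)).filter (fun p => p.1 ≤ p.2)

/-- `Γ` is an antichain in `Δ⁺(A_n)`: a set of pairwise incomparable positive roots. -/
def IsAC (n : ℕ) (Γ : Finset (ℕ × ℕ)) : Prop :=
  Γ ⊆ roots n ∧ ∀ p ∈ Γ, ∀ q ∈ Γ, rle p q → p = q

/-- The upper ideal `I(Γ) = {x ∈ Δ⁺ : ∃ γ ∈ Γ, γ ≼ x}` generated by `Γ`. -/
def upIdeal (n : ℕ) (Γ : Finset (ℕ × ℕ)) : Finset (ℕ × ℕ) :=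
  (roots n).filter (fun x => ∃ γ ∈ Γ, rle γ x)

/-- The set of maximal elements of `S` with respect to the root order. -/
def maxOf (S : Finset (ℕ × ℕ)) : Finset (ℕ × ℕ) :=
  S.filter (fun x => ∀ y ∈ S, rle x y → y = x)

/-- The set of minimal elements of `S` with respect to the root order. -/
def minOf (S : Finset (ℕ × ℕ)) : Finset (ℕ × ℕ) :=
  S.filter (fun x => ∀ y ∈ S, rle y x → y = x)

/-- The reverse operator `𝔛`, sending an antichain `Γ` to the set of maximal
elements of `Δ⁺ \ I(Γ)`. -/
def Xrev (n : ℕ) (Γ : Finset (ℕ × ℕ)) : Finset (ℕ × ℕ) :=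
  maxOf (roots n \ upIdeal n Γ)

/-- `r_Γ(γ) = #(I(Γ) \ {γ})_min − #I(Γ)_min + 1`. -/
def rGam (n : ℕ) (Γ : Finset (ℕ × ℕ)) (γ : ℕ × ℕ) : ℤ :=
  ((minOf (upIdeal n Γ \ {γ})).card : ℤ) - ((minOf (upIdeal n Γ)).card : ℤ) + 1

/-- The OY-number `𝒴(Γ) = Σ_{γ ∈ Γ} r_Γ(γ)`; in particular `𝒴(∅) = 0`. -/
def OY (n : ℕ) (Γ : Finset (ℕ × ℕ)) : ℤ := ∑ γ ∈ Γ, rGam n Γ γ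

lemma mem_roots' {n : ℕ} {p : ℕ × ℕ} : p ∈ roots n ↔ 1 ≤ p.1 ∧ p.1 ≤ p.2 ∧ p.2 ≤ n := by
  simp only [roots, mem_filter, mem_product, mem_Icc]
  omega

lemma rle_iff {p q : ℕ × ℕ} : rle p q ↔ q.1 ≤ p.1 ∧ p.2 ≤ q.2 := Iff.rfl

lemma rle_refl' (p : ℕ × ℕ) : rle p p := ⟨le_refl _, le_refl _⟩

lemma rle_trans' {p q r : ℕ × ℕ} (h1 : rle p q) (h2 : rle q r) : rle p r :=
  ⟨le_trans h2.1 h1.1, le_trans h1.2 h2.2⟩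

lemma rle_antisymm' {p q : ℕ × ℕ} (h1 : rle p q) (h2 : rle q p) : p = q := by
  obtain ⟨a, b⟩ := h1; obtain ⟨c, d⟩ := h2
  exact Prod.ext (le_antisymm c a) (le_antisymm b d)

lemma mem_upIdeal' {n : ℕ} {Γ : Finset (ℕ × ℕ)} {x : ℕ × ℕ} :
    x ∈ upIdeal n Γ ↔ x ∈ roots n ∧ ∃ γ ∈ Γ, rle γ x := by
  simp [upIdeal, mem_filter]

lemma mem_minOf' {S : Finset (ℕ × ℕ)} {x : ℕ × ℕ} :
    x ∈ minOf S ↔ x ∈ S ∧ ∀ y ∈ S, rle y x → y = x := by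
  simp [minOf, mem_filter]

lemma minOf_upIdeal {n : ℕ} {Γ : Finset (ℕ × ℕ)} (hΓ : IsAC n Γ) :
    minOf (upIdeal n Γ) = Γ := by
  obtain ⟨hsub, hac⟩ := hΓ
  ext x
  rw [mem_minOf', mem_upIdeal']
  constructor
  · rintro ⟨⟨hxr, γ, hγ, hle⟩, hmin⟩
    have hγI : γ ∈ upIdeal n Γ := mem_upIdeal'.mpr ⟨hsub hγ, γ, hγ, rle_refl' γ⟩
    have := hmin γ hγI hle
    rwa [← this]
  · intro hx
    refine ⟨⟨hsub hx, x, hx, rle_refl' x⟩, ?_⟩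
    intro y hy hyx
    obtain ⟨hyr, γ, hγ, hγy⟩ := mem_upIdeal'.mp hy
    have hγx : γ = x := hac γ hγ x hx (rle_trans' hγy hyx)
    subst hγx
    exact rle_antisymm' hyx hγy

def Nset (n : ℕ) (Γ : Finset (ℕ × ℕ)) (γ : ℕ × ℕ) : Finset (ℕ × ℕ) :=
  (roots n).filter (fun x => (x = (γ.1 - 1, γ.2) ∨ x = (γ.1, γ.2 + 1)) ∧
    ∀ γ' ∈ Γ.erase γ, ¬ rle γ' x)

lemma minOf_sdiff {n : ℕ} {Γ : Finset (ℕ × ℕ)} (hΓ : IsAC n Γ) {γ : ℕ × ℕ} (hγ : γ ∈ Γ) :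
    minOf (upIdeal n Γ \ {γ}) = (Γ.erase γ) ∪ Nset n Γ γ := by
  obtain ⟨hsub, hac⟩ := hΓ
  have hγr : 1 ≤ γ.1 ∧ γ.1 ≤ γ.2 ∧ γ.2 ≤ n := mem_roots'.mp (hsub hγ)
  obtain ⟨g1, g2⟩ := γ
  simp only [Prod.fst, Prod.snd] at hγr
  obtain ⟨hg1, hg12, hg2⟩ := hγr
  ext ⟨x1, x2⟩
  rw [mem_union, mem_erase, mem_minOf', mem_sdiff, mem_singleton]
  rw [Nset, mem_filter]
  simp only [Prod.mk.injEq]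
  constructor
  · rintro ⟨⟨hxI, hne⟩, hmin⟩
    obtain ⟨hxr, ⟨c1, c2⟩, hγ', hle⟩ := mem_upIdeal'.mp hxI
    obtain ⟨hx1, hx12, hx2⟩ := mem_roots'.mp hxr
    simp only [rle_iff] at hle
    simp only at hle hx1 hx12 hx2
    by_cases hgg : (c1, c2) = (g1, g2)
    · injection hgg.symm with e1 e2
      subst e1; subst e2
      right
      have hcand : (x1 = g1 - 1 ∧ x2 = g2) ∨ (x1 = g1 ∧ x2 = g2 + 1) := by
        rcases Nat.lt_or_ge g2 x2 with h2 | h2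
        · -- x2 > g2 ; show x = (g1, g2+1)
          right
          by_contra hxb
          have hy : (x1, x2 - 1) ∈ upIdeal n Γ \ {(g1, g2)} := by
            rw [mem_sdiff, mem_singleton, mem_upIdeal', mem_roots']
            refine ⟨⟨⟨by omega, by omega, by omega⟩, (g1, g2), hγ', ?_⟩, ?_⟩
            · exact ⟨by simpa using by omega, by simpa using by omega⟩
            · simp only [Prod.mk.injEq]; omega
          have := hmin (x1, x2 - 1) hy ⟨by simp, by simp <;> omega⟩
          simp only [Prod.mk.injEq] at this
          omega
        · -- x2 = g2, x1 < g1
          have hx2g : x2 = g2 := by omega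
          have hx1g : x1 < g1 := by
            rcases Nat.lt_or_ge x1 g1 with h | h
            · exact h
            · exact absurd ⟨by omega, hx2g⟩ hne
          left
          by_contra hxa
          have hy : (x1 + 1, g2) ∈ upIdeal n Γ \ {(g1, g2)} := by
            rw [mem_sdiff, mem_singleton, mem_upIdeal', mem_roots']
            refine ⟨⟨⟨by omega, by omega, by omega⟩, (g1, g2), hγ', ?_⟩, ?_⟩
            · exact ⟨by simpa using by omega, by simpa using by omega⟩
            · simp only [Prod.mk.injEq]; omega
          have := hmin (x1 + 1, g2) hy ⟨by simp <;> omega, by simp <;> omega⟩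
          simp only [Prod.mk.injEq] at this
          omega
      refine ⟨hxr, hcand, ?_⟩
      intro γ'' hγ'' hle''
      rw [mem_erase] at hγ''
      have hγ''I : γ'' ∈ upIdeal n Γ \ {(g1, g2)} := by
        rw [mem_sdiff, mem_singleton]
        exact ⟨mem_upIdeal'.mpr ⟨hsub hγ''.2, γ'', hγ''.2, rle_refl' _⟩, hγ''.1⟩
      have hxx := hmin γ'' hγ''I hle''
      -- γ'' = x, x ∈ Γ, rle (g1,g2) x ⇒ (g1,g2) = x, contra hne
      have hxΓ : (x1, x2) ∈ Γ := hxx ▸ hγ''.2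
      have := hac (g1, g2) hγ' (x1, x2) hxΓ (by exact ⟨by simpa using hle.1, by simpa using hle.2⟩)
      simp only [Prod.mk.injEq] at this
      omega
    · left
      have hγ'I : (c1, c2) ∈ upIdeal n Γ \ {(g1, g2)} := by
        rw [mem_sdiff, mem_singleton]
        exact ⟨mem_upIdeal'.mpr ⟨hsub hγ', _, hγ', rle_refl' _⟩, hgg⟩
      have := hmin (c1, c2) hγ'I (by exact ⟨by simpa using hle.1, by simpa using hle.2⟩)
      simp only [Prod.mk.injEq] at this hgg
      obtain ⟨t1, t2⟩ := this
      subst t1; subst t2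
      exact ⟨by simp only [ne_eq, Prod.mk.injEq]; exact hgg, hγ'⟩
  · rintro (⟨hne, hxΓ⟩ | ⟨hxr, hcand, hfil⟩)
    · refine ⟨⟨mem_upIdeal'.mpr ⟨hsub hxΓ, _, hxΓ, rle_refl' _⟩, by simpa using hne⟩, ?_⟩
      rintro y hy hyx
      rw [mem_sdiff] at hy
      obtain ⟨hyr, γ'', hγ'', hγ''y⟩ := mem_upIdeal'.mp hy.1
      have : γ'' = (x1, x2) := hac γ'' hγ'' (x1, x2) hxΓ (rle_trans' hγ''y hyx)
      subst this
      exact rle_antisymm' hyx hγ''y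
    · obtain ⟨hx1, hx12, hx2⟩ := mem_roots'.mp hxr
      simp only at hx1 hx12 hx2
      have hge : rle (g1, g2) (x1, x2) := by
        rcases hcand with ⟨h1, h2⟩ | ⟨h1, h2⟩ <;> exact ⟨by simp; omega, by simp; omega⟩
      have hne : ¬ (x1 = g1 ∧ x2 = g2) := by
        rcases hcand with ⟨h1, h2⟩ | ⟨h1, h2⟩ <;> omega
      refine ⟨⟨mem_upIdeal'.mpr ⟨hxr, (g1, g2), hγ, hge⟩, hne⟩, ?_⟩
      rintro ⟨y1, y2⟩ hy hyx
      rw [mem_sdiff, mem_singleton] at hy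
      obtain ⟨hyI, hyne⟩ := hy
      obtain ⟨hyr, γ'', hγ'', hγ''y⟩ := mem_upIdeal'.mp hyI
      by_cases hgg : γ'' = (g1, g2)
      · subst hgg
        obtain ⟨hy1, hy2⟩ := hγ''y
        obtain ⟨hz1, hz2⟩ := hyx
        simp only at hy1 hy2 hz1 hz2
        simp only [Prod.mk.injEq] at hyne ⊢
        rcases hcand with ⟨h1, h2⟩ | ⟨h1, h2⟩ <;> omega
      · exfalso
        exact hfil γ'' (mem_erase.mpr ⟨hgg, hγ''⟩) (rle_trans' hγ''y hyx)

lemma Nset_disj {n : ℕ} {Γ : Finset (ℕ × ℕ)} (hΓ : IsAC n Γ) {γ : ℕ × ℕ} (hγ : γ ∈ Γ) :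
    Disjoint (Γ.erase γ) (Nset n Γ γ) := by
  obtain ⟨hsub, hac⟩ := hΓ
  rw [Finset.disjoint_left]
  intro x hxe hxN
  rw [mem_erase] at hxe
  rw [Nset, mem_filter] at hxN
  obtain ⟨hxr, hcand, _⟩ := hxN
  have hxrr := mem_roots'.mp hxr
  have hge : rle γ x := by
    rcases hcand with h | h <;> subst h <;>
      exact ⟨by simp <;> omega, by simp <;> omega⟩
  have := hac γ hγ x hxe.2 hge
  exact hxe.1 this.symm

lemma rGam_eq {n : ℕ} {Γ : Finset (ℕ × ℕ)} (hΓ : IsAC n Γ) {γ : ℕ × ℕ} (hγ : γ ∈ Γ) :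
    rGam n Γ γ = ((Nset n Γ γ).card : ℤ) := by
  have h1 := minOf_upIdeal hΓ
  have h2 := minOf_sdiff hΓ hγ
  have hd := Nset_disj hΓ hγ
  have hpos : 1 ≤ Γ.card := Finset.card_pos.mpr ⟨γ, hγ⟩
  rw [rGam, h2, h1, Finset.card_union_of_disjoint hd, Finset.card_erase_of_mem hγ]
  omega

lemma memL {n : ℕ} {Γ : Finset (ℕ × ℕ)} (hΓ : IsAC n Γ) {γ : ℕ × ℕ} (hγ : γ ∈ Γ) :
    (γ.1 - 1, γ.2) ∈ Nset n Γ γ ↔ (2 ≤ γ.1 ∧ γ.1 - 1 ∉ Γ.image Prod.fst) := by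
  obtain ⟨hsub, hac⟩ := hΓ
  have hγr := mem_roots'.mp (hsub hγ)
  constructor
  · intro h
    rw [Nset, mem_filter] at h
    obtain ⟨hroots, _, hfil⟩ := h
    have hr := mem_roots'.mp hroots
    simp only at hr
    refine ⟨by omega, ?_⟩
    simp only [mem_image, not_exists]
    intro p hpc
    obtain ⟨hp, hp1⟩ := hpc
    have hpne : p ≠ γ := by
      intro hh; subst hh; omega
    have hpr := mem_roots'.mp (hsub hp)
    have hp2 : p.2 ≤ γ.2 := by
      by_contra hcon
      have : rle γ p := ⟨by omega, by omega⟩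
      exact hpne (hac γ hγ p hp this).symm
    exact hfil p (mem_erase.mpr ⟨hpne, hp⟩) ⟨by simp only; omega, by simp only; omega⟩
  · rintro ⟨h2, hnot⟩
    rw [Nset, mem_filter]
    refine ⟨mem_roots'.mpr ⟨by simp only; omega, by simp only; omega, by simp only; omega⟩,
      Or.inl rfl, ?_⟩
    intro γ' hγ' hle
    rw [mem_erase] at hγ'
    obtain ⟨hle1, hle2⟩ := hle
    simp only at hle1 hle2
    by_cases hc : γ.1 ≤ γ'.1
    · exact hγ'.1 (hac γ' hγ'.2 γ hγ ⟨hc, hle2⟩)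
    · exact hnot (mem_image.mpr ⟨γ', hγ'.2, by omega⟩)

lemma memR {n : ℕ} {Γ : Finset (ℕ × ℕ)} (hΓ : IsAC n Γ) {γ : ℕ × ℕ} (hγ : γ ∈ Γ) :
    (γ.1, γ.2 + 1) ∈ Nset n Γ γ ↔ (γ.2 + 1 ≤ n ∧ γ.2 + 1 ∉ Γ.image Prod.snd) := by
  obtain ⟨hsub, hac⟩ := hΓ
  have hγr := mem_roots'.mp (hsub hγ)
  constructor
  · intro h
    rw [Nset, mem_filter] at h
    obtain ⟨hroots, _, hfil⟩ := h
    have hr := mem_roots'.mp hroots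
    simp only at hr
    refine ⟨by omega, ?_⟩
    simp only [mem_image, not_exists]
    intro p hpc
    obtain ⟨hp, hp2⟩ := hpc
    have hpne : p ≠ γ := by
      intro hh; subst hh; omega
    have hpr := mem_roots'.mp (hsub hp)
    have hp1 : γ.1 ≤ p.1 := by
      by_contra hcon
      have : rle γ p := ⟨by omega, by omega⟩
      exact hpne (hac γ hγ p hp this).symm
    exact hfil p (mem_erase.mpr ⟨hpne, hp⟩) ⟨by simp only; omega, by simp only; omega⟩
  · rintro ⟨h2, hnot⟩
    rw [Nset, mem_filter]
    refine ⟨mem_roots'.mpr ⟨by simp only; omega, by simp only; omega, by simp only; omega⟩,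
      Or.inr rfl, ?_⟩
    intro γ' hγ' hle
    rw [mem_erase] at hγ'
    obtain ⟨hle1, hle2⟩ := hle
    simp only at hle1 hle2
    by_cases hc : γ'.2 ≤ γ.2
    · exact hγ'.1 (hac γ' hγ'.2 γ hγ ⟨hle1, hc⟩)
    · exact hnot (mem_image.mpr ⟨γ', hγ'.2, by omega⟩)

lemma Nset_card {n : ℕ} {Γ : Finset (ℕ × ℕ)} (hΓ : IsAC n Γ) {γ : ℕ × ℕ} (hγ : γ ∈ Γ) :
    (Nset n Γ γ).card =
      (if 2 ≤ γ.1 ∧ γ.1 - 1 ∉ Γ.image Prod.fst then 1 else 0) +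
      (if γ.2 + 1 ≤ n ∧ γ.2 + 1 ∉ Γ.image Prod.snd then 1 else 0) := by
  have hab : (γ.1 - 1, γ.2) ≠ (γ.1, γ.2 + 1) := by
    simp only [ne_eq, Prod.mk.injEq]; omega
  have hsubs : Nset n Γ γ = ({(γ.1 - 1, γ.2), (γ.1, γ.2 + 1)} : Finset (ℕ × ℕ)).filter
      (fun x => x ∈ Nset n Γ γ) := by
    ext x
    simp only [mem_filter, mem_insert, mem_singleton]
    constructor
    · intro h
      refine ⟨?_, h⟩
      rw [Nset, mem_filter] at h
      exact h.2.1
    · exact fun h => h.2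
  have hL := memL hΓ hγ
  have hR := memR hΓ hγ
  rw [hsubs, filter_insert, filter_singleton]
  by_cases hA : (γ.1 - 1, γ.2) ∈ Nset n Γ γ <;> by_cases hB : (γ.1, γ.2 + 1) ∈ Nset n Γ γ
  · rw [if_pos hA, if_pos hB, if_pos (hL.mp hA), if_pos (hR.mp hB),
      card_insert_of_notMem (by simp [hab]), card_singleton]
  · rw [if_pos hA, if_neg hB, if_pos (hL.mp hA), if_neg (fun h => hB (hR.mpr h))]
    simp
  · rw [if_neg hA, if_pos hB, if_neg (fun h => hA (hL.mpr h)), if_pos (hR.mp hB)]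
    simp
  · rw [if_neg hA, if_neg hB, if_neg (fun h => hA (hL.mpr h)), if_neg (fun h => hB (hR.mpr h))]
    simp

lemma fst_injOn {n : ℕ} {Γ : Finset (ℕ × ℕ)} (hΓ : IsAC n Γ) :
    Set.InjOn Prod.fst (Γ : Set (ℕ × ℕ)) := by
  obtain ⟨hsub, hac⟩ := hΓ
  intro p hp q hq h
  rcases le_total p.2 q.2 with hh | hh
  · exact hac p (Finset.mem_coe.mp hp) q (Finset.mem_coe.mp hq) ⟨le_of_eq h.symm, hh⟩
  · exact (hac q (Finset.mem_coe.mp hq) p (Finset.mem_coe.mp hp) ⟨le_of_eq h, hh⟩).symm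

lemma snd_injOn {n : ℕ} {Γ : Finset (ℕ × ℕ)} (hΓ : IsAC n Γ) :
    Set.InjOn Prod.snd (Γ : Set (ℕ × ℕ)) := by
  obtain ⟨hsub, hac⟩ := hΓ
  intro p hp q hq h
  rcases le_total p.1 q.1 with hh | hh
  · exact (hac q (Finset.mem_coe.mp hq) p (Finset.mem_coe.mp hp) ⟨hh, le_of_eq h.symm⟩).symm
  · exact hac p (Finset.mem_coe.mp hp) q (Finset.mem_coe.mp hq) ⟨hh, le_of_eq h⟩

lemma card_filter_comp {α β : Type*} [DecidableEq β] (f : α → β) (s : Finset α)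
    (hf : Set.InjOn f ↑s) (P : β → Prop) [DecidablePred P] :
    (s.filter (fun x => P (f x))).card = ((s.image f).filter P).card := by
  rw [Finset.filter_image]
  exact (Finset.card_image_of_injOn (hf.mono (Finset.coe_subset.mpr (Finset.filter_subset _ _)))).symm

lemma count_bound {n : ℕ} (hn : 1 ≤ n) {S T : Finset ℕ} (hS : S ⊆ Finset.Icc 1 n)
    (hT : T ⊆ Finset.Icc 1 n) (hcard : S.card = T.card) (h1 : 1 ∈ T → 1 ∈ S) :
    (S.filter (fun v => 2 ≤ v ∧ v - 1 ∉ S)).card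
      + (T.filter (fun w => w + 1 ≤ n ∧ w + 1 ∉ T)).card ≤ n - 1 := by
  classical
  set E := Finset.Icc 2 n with hE
  have hSm : ∀ v ∈ S, 1 ≤ v ∧ v ≤ n := fun v hv => Finset.mem_Icc.mp (hS hv)
  have hTm : ∀ v ∈ T, 1 ≤ v ∧ v ≤ n := fun v hv => Finset.mem_Icc.mp (hT hv)
  have hA : S.filter (fun v => 2 ≤ v ∧ v - 1 ∉ S) = E.filter (fun m => m ∈ S ∧ m - 1 ∉ S) := by
    ext m
    simp only [mem_filter, hE, Finset.mem_Icc]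
    constructor
    · rintro ⟨hm, h2, h3⟩
      exact ⟨⟨h2, (hSm m hm).2⟩, hm, h3⟩
    · rintro ⟨⟨h2, _⟩, hm, h3⟩
      exact ⟨hm, h2, h3⟩
  have hBimg : (T.filter (fun w => w + 1 ≤ n ∧ w + 1 ∉ T)).image (fun w => w + 1)
      = E.filter (fun m => m - 1 ∈ T ∧ m ∉ T) := by
    ext m
    simp only [Finset.mem_image, mem_filter, hE, Finset.mem_Icc]
    constructor
    · rintro ⟨w, ⟨hw, hwn, hw1⟩, rfl⟩
      have := (hTm w hw).1
      refine ⟨⟨by omega, hwn⟩, ?_, hw1⟩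
      rw [Nat.add_sub_cancel]
      exact hw
    · rintro ⟨⟨h2, hmn⟩, hmT, hmnT⟩
      refine ⟨m - 1, ⟨hmT, by omega, ?_⟩, by omega⟩
      rw [show m - 1 + 1 = m by omega]
      exact hmnT
  have hB : (T.filter (fun w => w + 1 ≤ n ∧ w + 1 ∉ T)).card
      = (E.filter (fun m => m - 1 ∈ T ∧ m ∉ T)).card := by
    rw [← hBimg, Finset.card_image_of_injective _ (add_left_injective 1)]
  have hand : (E.filter (fun m => (m ∈ S ∧ m - 1 ∉ S) ∧ (m - 1 ∈ T ∧ m ∉ T))).card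
      ≤ (E.filter (fun m => m ∈ S ∧ m ∉ T)).card := by
    apply Finset.card_le_card
    exact Finset.monotone_filter_right _ (fun m _ hm => ⟨hm.1.1, hm.2.2⟩)
  have hinc : E.filter (fun m => m ∈ S ∧ m ∉ T) = (S \ T).filter (fun m => 2 ≤ m) := by
    ext m
    simp only [mem_filter, Finset.mem_Icc, Finset.mem_sdiff, hE]
    constructor
    · rintro ⟨⟨h2, _⟩, hs, ht⟩; exact ⟨⟨hs, ht⟩, h2⟩
    · rintro ⟨⟨hs, ht⟩, h2⟩; exact ⟨⟨h2, (hSm m hs).2⟩, hs, ht⟩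
  have hdec : E.filter (fun m => m ∈ T ∧ m ∉ S) = T \ S := by
    ext m
    simp only [mem_filter, Finset.mem_Icc, Finset.mem_sdiff, hE]
    constructor
    · rintro ⟨_, ht, hs⟩; exact ⟨ht, hs⟩
    · rintro ⟨ht, hs⟩
      have h1' := (hTm m ht).1
      have h2' : 2 ≤ m := by
        rcases Nat.lt_or_ge m 2 with h | h
        · have hm1 : m = 1 := by omega
          subst hm1
          exact absurd (h1 ht) hs
        · exact h
      exact ⟨⟨h2', (hTm m ht).2⟩, ht, hs⟩
  have hcd : ((S \ T).filter (fun m => 2 ≤ m)).card ≤ (T \ S).card :=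
    le_trans (Finset.card_le_card (Finset.filter_subset _ _))
      (le_of_eq (Finset.card_sdiff_comm hcard))
  have hdisj : Disjoint (E.filter (fun m => (m ∈ S ∧ m - 1 ∉ S) ∨ (m - 1 ∈ T ∧ m ∉ T)))
      (E.filter (fun m => m ∈ T ∧ m ∉ S)) := by
    rw [Finset.disjoint_left]
    rintro m hm hm'
    rw [mem_filter] at hm hm'
    rcases hm.2 with h | h
    · exact hm'.2.2 h.1
    · exact h.2 hm'.2.1
  have hunion : (E.filter (fun m => (m ∈ S ∧ m - 1 ∉ S) ∨ (m - 1 ∈ T ∧ m ∉ T))).card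
      + (E.filter (fun m => m ∈ T ∧ m ∉ S)).card ≤ E.card := by
    rw [← Finset.card_union_of_disjoint hdisj]
    exact Finset.card_le_card
      (Finset.union_subset (Finset.filter_subset _ _) (Finset.filter_subset _ _))
  have hie : (E.filter (fun m => m ∈ S ∧ m - 1 ∉ S)).card
      + (E.filter (fun m => m - 1 ∈ T ∧ m ∉ T)).card
      = (E.filter (fun m => (m ∈ S ∧ m - 1 ∉ S) ∨ (m - 1 ∈ T ∧ m ∉ T))).card
      + (E.filter (fun m => (m ∈ S ∧ m - 1 ∉ S) ∧ (m - 1 ∈ T ∧ m ∉ T))).card := by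
    have e_or := Finset.filter_or (p := fun m => m ∈ S ∧ m - 1 ∉ S)
      (q := fun m => m - 1 ∈ T ∧ m ∉ T) E
    have e_and := Finset.filter_and (p := fun m => m ∈ S ∧ m - 1 ∉ S)
      (q := fun m => m - 1 ∈ T ∧ m ∉ T) E
    rw [e_or, e_and]
    exact (Finset.card_union_add_card_inter
      (E.filter (fun m => m ∈ S ∧ m - 1 ∉ S)) (E.filter (fun m => m - 1 ∈ T ∧ m ∉ T))).symm
  have hEcard : E.card = n - 1 := by rw [hE, Nat.card_Icc]; omega
  have h5 : (E.filter (fun m => (m ∈ S ∧ m - 1 ∉ S) ∧ (m - 1 ∈ T ∧ m ∉ T))).card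
      ≤ (T \ S).card := le_trans hand (le_trans (le_of_eq (by rw [hinc])) hcd)
  rw [hdec] at hunion
  rw [hA, hB]
  omega

lemma OY_eq {n : ℕ} {Γ : Finset (ℕ × ℕ)} (hΓ : IsAC n Γ) :
    OY n Γ = (((Γ.filter (fun γ => 2 ≤ γ.1 ∧ γ.1 - 1 ∉ Γ.image Prod.fst)).card
      + (Γ.filter (fun γ => γ.2 + 1 ≤ n ∧ γ.2 + 1 ∉ Γ.image Prod.snd)).card : ℕ) : ℤ) := by
  classical
  rw [OY, Finset.sum_congr rfl (fun γ h => rGam_eq hΓ h), ← Nat.cast_sum]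
  congr 1
  rw [Finset.sum_congr rfl (fun γ h => Nset_card hΓ h), Finset.sum_add_distrib]
  congr 1 <;> rw [Finset.sum_boole, Nat.cast_id]


/-- For every antichain `Γ` in `Δ⁺(A_n)`, the OY-number satisfies
`0 ≤ 𝒴(Γ) ≤ n − 1`. -/
theorem stmt6 (n : ℕ) (hn : 1 ≤ n) (Γ : Finset (ℕ × ℕ)) (hΓ : IsAC n Γ) :
    0 ≤ OY n Γ ∧ OY n Γ ≤ (n : ℤ) - 1 := by
  constructor
  · rw [OY_eq hΓ]
    exact Int.natCast_nonneg _
  · rw [OY_eq hΓ]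
    have hsub := hΓ.1
    have hS : Γ.image Prod.fst ⊆ Finset.Icc 1 n := by
      intro v hv
      obtain ⟨γ, hγ, rfl⟩ := Finset.mem_image.mp hv
      have := mem_roots'.mp (hsub hγ)
      exact Finset.mem_Icc.mpr ⟨this.1, by omega⟩
    have hT : Γ.image Prod.snd ⊆ Finset.Icc 1 n := by
      intro v hv
      obtain ⟨γ, hγ, rfl⟩ := Finset.mem_image.mp hv
      have := mem_roots'.mp (hsub hγ)
      exact Finset.mem_Icc.mpr ⟨by omega, this.2.2⟩
    have hcard : (Γ.image Prod.fst).card = (Γ.image Prod.snd).card := by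
      rw [Finset.card_image_of_injOn (fst_injOn hΓ), Finset.card_image_of_injOn (snd_injOn hΓ)]
    have h1 : 1 ∈ Γ.image Prod.snd → 1 ∈ Γ.image Prod.fst := by
      intro h
      obtain ⟨γ, hγ, h2⟩ := Finset.mem_image.mp h
      have := mem_roots'.mp (hsub hγ)
      exact Finset.mem_image.mpr ⟨γ, hγ, by omega⟩
    have key := count_bound hn hS hT hcard h1
    have hA := card_filter_comp Prod.fst Γ (fst_injOn hΓ)
      (fun v => 2 ≤ v ∧ v - 1 ∉ Γ.image Prod.fst)
    have hB := card_filter_comp Prod.snd Γ (snd_injOn hΓ)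
      (fun w => w + 1 ≤ n ∧ w + 1 ∉ Γ.image Prod.snd)
    rw [hA, hB]
    omega
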